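/- Let A be a subset of {1, …, N} and let f be an entire function on ℂᴺ. If f vanishes on the coordinate subspace {z ∈ ℂᴺ : z_i = 0 for all i ∈ A}, then there exist entire functions g_i on ℂᴺ, indexed by i ∈ A, such that f(z) = Σ_{i ∈ A} z_i · g_i(z) for all z ∈ ℂᴺ. -/

import Mathlib

open Function
open scoped ENNReal NNReal
set_option maxHeartbeats 1000000

noncomputable section Stmt4Aux

variable {N : ℕ}

def zcoord (i : Fin N) : (Fin N → ℂ) →L[ℂ] (Fin N → ℂ) :=
  ContinuousLinearMap.pi fun j => if j = i then 0 else ContinuousLinearMap.proj j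

lemma zcoord_apply (i : Fin N) (u : Fin N → ℂ) (j : Fin N) :
    zcoord i u j = if j = i then 0 else u j := by
  simp only [zcoord, ContinuousLinearMap.pi_apply]
  split_ifs <;> simp

lemma norm_zcoord_apply_le (i : Fin N) (u : Fin N → ℂ) : ‖zcoord i u‖ ≤ ‖u‖ := by
  refine (pi_norm_le_iff_of_nonneg (norm_nonneg u)).2 fun j => ?_
  rw [zcoord_apply]
  split_ifs
  · simp
  · exact norm_le_pi_norm u j

def evec (i : Fin N) : Fin N → ℂ := Pi.single i 1

lemma norm_evec_le (i : Fin N) : ‖evec i‖ ≤ 1 := by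
  refine (pi_norm_le_iff_of_nonneg zero_le_one).2 fun j => ?_
  rcases eq_or_ne j i with rfl | h
  · simp [evec, Pi.single_apply]
  · simp [evec, Pi.single_apply, h]

lemma decomp_evec (i : Fin N) (v : Fin N → ℂ) : v = zcoord i v + v i • evec i := by
  funext j
  rcases eq_or_ne j i with rfl | h
  · simp [zcoord_apply, evec]
  · simp [zcoord_apply, h, evec, Pi.single_apply]

lemma insertNth_update' {m : ℕ} {α : Type*} [DecidableEq (Fin m)] (j : Fin (m + 1)) (x : α)
    (u : Fin m → α) (t : Fin m) (y : α) :
    j.insertNth x (Function.update u t y) =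
      Function.update (j.insertNth x u : Fin (m + 1) → α) (j.succAbove t) y := by
  funext s
  induction s using Fin.succAboveCases (i := j) with
  | x =>
    rw [Fin.insertNth_apply_same, Function.update_of_ne (Fin.succAbove_ne j t).symm,
      Fin.insertNth_apply_same]
  | p t' =>
    rw [Fin.insertNth_apply_succAbove]
    rcases eq_or_ne t' t with rfl | h
    · rw [Function.update_self, Function.update_self]
    · rw [Function.update_of_ne h,
        Function.update_of_ne (fun hc => h (Fin.succAbove_right_injective hc)),
        Fin.insertNth_apply_succAbove]

variable (p : FormalMultilinearSeries ℂ (Fin N → ℂ) ℂ) (i : Fin N)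

/-- `p (m+1)` with `zcoord i` applied in the slots before `j`. -/
def Pcomp (m : ℕ) (j : Fin (m + 1)) :
    ContinuousMultilinearMap ℂ (fun _ : Fin (m + 1) => (Fin N → ℂ)) ℂ :=
  (p (m + 1)).compContinuousLinearMap
    (fun s => if (s : ℕ) < (j : ℕ) then zcoord i else ContinuousLinearMap.id ℂ _)

lemma Pcomp_apply (m : ℕ) (j : Fin (m + 1)) (u : Fin (m + 1) → (Fin N → ℂ)) :
    Pcomp p i m j u
      = p (m + 1) (fun s => if (s : ℕ) < (j : ℕ) then zcoord i (u s) else u s) := by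
  rw [Pcomp, ContinuousMultilinearMap.compContinuousLinearMap_apply]
  congr 1
  funext s
  split_ifs <;> simp

lemma norm_Pcomp_le (m : ℕ) (j : Fin (m + 1)) : ‖Pcomp p i m j‖ ≤ ‖p (m + 1)‖ := by
  refine (ContinuousMultilinearMap.norm_compContinuousLinearMap_le _ _).trans ?_
  have h1 : ∀ s : Fin (m + 1),
      ‖if (s : ℕ) < (j : ℕ) then zcoord i else ContinuousLinearMap.id ℂ (Fin N → ℂ)‖ ≤ 1 := by
    intro s
    split_ifs
    · exact ContinuousLinearMap.opNorm_le_bound _ zero_le_one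
        (fun u => by simpa using norm_zcoord_apply_le i u)
    · exact ContinuousLinearMap.norm_id_le
  calc ‖p (m + 1)‖ * ∏ s : Fin (m + 1),
        ‖if (s : ℕ) < (j : ℕ) then zcoord i else ContinuousLinearMap.id ℂ (Fin N → ℂ)‖
      ≤ ‖p (m + 1)‖ * 1 := by
        refine mul_le_mul_of_nonneg_left ?_ (norm_nonneg _)
        exact Finset.prod_le_one (fun s _ => norm_nonneg _) (fun s _ => h1 s)
    _ = ‖p (m + 1)‖ := mul_one _

/-- The `j`-th term of the degree-`m` part of the quotient series, as a multilinear map. -/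
def Qml (m : ℕ) (j : Fin (m + 1)) : MultilinearMap ℂ (fun _ : Fin m => (Fin N → ℂ)) ℂ where
  toFun u := Pcomp p i m j (j.insertNth (evec i) u)
  map_update_add' := by
    intro inst u t x y
    simp only [insertNth_update']
    exact (Pcomp p i m j).toMultilinearMap.map_update_add _ _ _ _
  map_update_smul' := by
    intro inst u t c x
    simp only [insertNth_update']
    exact (Pcomp p i m j).toMultilinearMap.map_update_smul _ _ _ _

lemma Qml_bound (m : ℕ) (j : Fin (m + 1)) (u : Fin m → (Fin N → ℂ)) :
    ‖Qml p i m j u‖ ≤ ‖p (m + 1)‖ * ∏ t, ‖u t‖ := by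
  have h0 : Qml p i m j u = Pcomp p i m j (j.insertNth (evec i) u) := rfl
  rw [h0]
  refine ((Pcomp p i m j).le_opNorm _).trans ?_
  have hprod : (∏ s : Fin (m + 1), ‖(j.insertNth (evec i) u : Fin (m+1) → (Fin N → ℂ)) s‖)
      = ‖evec i‖ * ∏ t, ‖u t‖ := by
    rw [Fin.prod_univ_succAbove (fun s => ‖(j.insertNth (evec i) u : Fin (m+1) → (Fin N → ℂ)) s‖) j]
    simp
  rw [hprod]
  have hnn : (0:ℝ) ≤ ∏ t, ‖u t‖ := Finset.prod_nonneg (fun t _ => norm_nonneg _)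
  calc ‖Pcomp p i m j‖ * (‖evec i‖ * ∏ t, ‖u t‖)
      ≤ ‖p (m+1)‖ * (1 * ∏ t, ‖u t‖) := by
        refine mul_le_mul (norm_Pcomp_le p i m j) ?_ ?_ (norm_nonneg _)
        · exact mul_le_mul_of_nonneg_right (norm_evec_le i) hnn
        · exact mul_nonneg (norm_nonneg _) hnn
    _ = ‖p (m+1)‖ * ∏ t, ‖u t‖ := by rw [one_mul]

def Qc (m : ℕ) (j : Fin (m + 1)) : ContinuousMultilinearMap ℂ (fun _ : Fin m => (Fin N → ℂ)) ℂ :=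
  (Qml p i m j).mkContinuous ‖p (m + 1)‖ (Qml_bound p i m j)

def qSeries : FormalMultilinearSeries ℂ (Fin N → ℂ) ℂ := fun m => ∑ j : Fin (m + 1), Qc p i m j

lemma norm_qSeries_le (m : ℕ) : ‖qSeries p i m‖ ≤ (m + 1) * ‖p (m + 1)‖ := by
  refine (norm_sum_le _ _).trans ?_
  have : ∀ j : Fin (m+1), ‖Qc p i m j‖ ≤ ‖p (m + 1)‖ :=
    fun j => MultilinearMap.mkContinuous_norm_le _ (norm_nonneg _) _
  calc (∑ j : Fin (m+1), ‖Qc p i m j‖) ≤ ∑ _j : Fin (m+1), ‖p (m+1)‖ :=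
        Finset.sum_le_sum (fun j _ => this j)
    _ = (m+1) * ‖p (m+1)‖ := by simp


lemma qSeries_diag (m : ℕ) (v : Fin N → ℂ) :
    v i * (qSeries p i m fun _ => v)
      = (p (m + 1) fun _ => v) - (p (m + 1) fun _ => zcoord i v) := by
  classical
  set T : ℕ → ℂ :=
    fun k => p (m + 1) (fun s : Fin (m + 1) => if (s : ℕ) < k then zcoord i v else v) with hT
  have hconst : ∀ j : Fin (m + 1), (j.insertNth v fun _ => v) = fun _ : Fin (m+1) => v := by
    intro j
    funext s
    induction s using Fin.succAboveCases (i := j) with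
    | x => rw [Fin.insertNth_apply_same]
    | p t => rw [Fin.insertNth_apply_succAbove]
  have keyj : ∀ j : Fin (m + 1),
      v i * (Qc p i m j fun _ => v) = T (j : ℕ) - T ((j : ℕ) + 1) := by
    intro j
    have h0 : (Qc p i m j fun _ => v) = Pcomp p i m j (j.insertNth (evec i) fun _ => v) := rfl
    have e0 : Function.update (j.insertNth (evec i) (fun _ : Fin m => v) : Fin (m+1) → (Fin N → ℂ))
        j (evec i) = j.insertNth (evec i) (fun _ => v) :=
      Fin.update_insertNth (α := fun _ : Fin (m+1) => (Fin N → ℂ)) j (evec i) (evec i) (fun _ => v)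
    have e1 : (j.insertNth (v i • evec i) fun _ : Fin m => v)
        = Function.update (j.insertNth (evec i) (fun _ => v) : Fin (m+1) → (Fin N → ℂ)) j
          (v i • evec i) :=
      (Fin.update_insertNth (α := fun _ : Fin (m+1) => (Fin N → ℂ)) j (evec i) (v i • evec i)
        (fun _ => v)).symm
    have h1 : v i * Pcomp p i m j (j.insertNth (evec i) fun _ => v)
        = Pcomp p i m j (j.insertNth (v i • evec i) fun _ => v) := by
      rw [e1, (Pcomp p i m j).map_update_smul _ _ _ _, e0]
      simp
    have h2 : v i • evec i = v - zcoord i v := by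
      rw [eq_sub_iff_add_eq, add_comm]
      exact (decomp_evec i v).symm
    have e2 : (j.insertNth (v - zcoord i v) fun _ : Fin m => v)
        = Function.update (j.insertNth v (fun _ => v) : Fin (m+1) → (Fin N → ℂ)) j
          (v - zcoord i v) :=
      (Fin.update_insertNth (α := fun _ : Fin (m+1) => (Fin N → ℂ)) j v (v - zcoord i v)
        (fun _ => v)).symm
    have e3 : Function.update (j.insertNth v (fun _ : Fin m => v) : Fin (m+1) → (Fin N → ℂ)) j v
        = j.insertNth v (fun _ => v) :=
      Fin.update_insertNth (α := fun _ : Fin (m+1) => (Fin N → ℂ)) j v v (fun _ => v)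
    have e4 : Function.update (j.insertNth v (fun _ : Fin m => v) : Fin (m+1) → (Fin N → ℂ)) j
        (zcoord i v) = j.insertNth (zcoord i v) (fun _ => v) :=
      Fin.update_insertNth (α := fun _ : Fin (m+1) => (Fin N → ℂ)) j v (zcoord i v) (fun _ => v)
    have h3 : Pcomp p i m j (j.insertNth (v - zcoord i v) fun _ => v)
        = Pcomp p i m j (j.insertNth v fun _ => v)
          - Pcomp p i m j (j.insertNth (zcoord i v) fun _ => v) := by
      rw [e2, (Pcomp p i m j).map_update_sub _ _ _ _, e3, e4]
    have h4 : Pcomp p i m j (j.insertNth v fun _ => v) = T (j : ℕ) := by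
      rw [hconst j, Pcomp_apply]
    have h5 : Pcomp p i m j (j.insertNth (zcoord i v) fun _ => v) = T ((j : ℕ) + 1) := by
      rw [Pcomp_apply]
      simp only [hT]
      congr 1
      funext s
      induction s using Fin.succAboveCases (i := j) with
      | x =>
        rw [Fin.insertNth_apply_same]
        simp
      | p t =>
        rw [Fin.insertNth_apply_succAbove]
        have hne : ((j.succAbove t : Fin (m+1)) : ℕ) ≠ (j : ℕ) :=
          fun h => Fin.succAbove_ne j t (Fin.val_injective h)
        exact if_congr (by omega) rfl rfl
    rw [h0, h1, h2, h3, h4, h5]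
  have hsum : (qSeries p i m fun _ => v) = ∑ j : Fin (m + 1), (Qc p i m j fun _ => v) := by
    rw [qSeries]
    simp
  rw [hsum, Finset.mul_sum]
  have : ∀ j : Fin (m+1), v i * (Qc p i m j fun _ => v) = T (j:ℕ) - T ((j:ℕ)+1) := keyj
  rw [Finset.sum_congr rfl (fun j _ => this j)]
  rw [Fin.sum_univ_eq_sum_range (fun k => T k - T (k + 1)) (m + 1),
    Finset.sum_range_sub' T (m + 1)]
  have hT0 : T 0 = p (m + 1) fun _ => v := by
    simp only [hT, Nat.not_lt_zero, if_false]
  have hTm : T (m + 1) = p (m + 1) fun _ => zcoord i v := by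
    simp only [hT]
    congr 1
    funext s
    exact if_pos s.isLt
  rw [hT0, hTm]


lemma analytic_div_coord (i : Fin N) (F : (Fin N → ℂ) → ℂ)
    (hF : AnalyticOnNhd ℂ F Set.univ) (hvan : ∀ z, z i = 0 → F z = 0) :
    ∃ G : (Fin N → ℂ) → ℂ, AnalyticOnNhd ℂ G Set.univ ∧ ∀ z, F z = z i * G z := by
  classical
  set G : (Fin N → ℂ) → ℂ := fun z =>
    if z i = 0 then deriv (fun t : ℂ => F (Function.update z i t)) 0 else F z / z i with hGdef
  refine ⟨G, ?_, ?_⟩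
  · -- analyticity
    intro x _
    by_cases hx : x i = 0
    · -- hard case
      obtain ⟨pp, hppat⟩ := hF x (Set.mem_univ x)
      obtain ⟨rr, hpr⟩ := hppat
      have hrad0 : 0 < pp.radius := lt_of_lt_of_le hpr.r_pos hpr.r_le
      have hmin0 : (0 : ℝ≥0∞) < min rr pp.radius := lt_min hpr.r_pos hrad0
      obtain ⟨r₁, hr₁0, hr₁lt⟩ := ENNReal.lt_iff_exists_nnreal_btwn.1 hmin0
      have hr₁0' : 0 < r₁ := by
        have := hr₁0
        simpa using this
      have hr₁R : (0 : ℝ) < (r₁ : ℝ) := hr₁0'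
      have hr₁rr : (r₁ : ℝ≥0∞) < rr := hr₁lt.trans_le (min_le_left _ _)
      have hr₁rad : (r₁ : ℝ≥0∞) < pp.radius := hr₁lt.trans_le (min_le_right _ _)
      obtain ⟨a, ⟨ha0, ha1⟩, C, hC, hbound⟩ := pp.norm_mul_pow_le_mul_pow_of_lt_radius hr₁rad
      set q : FormalMultilinearSeries ℂ (Fin N → ℂ) ℂ := qSeries pp i with hq
      set t : ℝ≥0 := r₁ / 2 with ht
      have htpos : 0 < t := by positivity
      have htR : ((t : ℝ≥0) : ℝ) = (r₁ : ℝ) / 2 := by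
        simp [ht]
      -- radius bound for q
      have hqrad : (t : ℝ≥0∞) ≤ q.radius := by
        refine q.le_radius_of_bound (C / r₁) fun m => ?_
        have hq1 : ‖q m‖ ≤ ((m : ℝ) + 1) * ‖pp (m + 1)‖ := by
          have := norm_qSeries_le pp i m
          push_cast at this ⊢
          linarith
        have hp1 : ‖pp (m + 1)‖ * (r₁ : ℝ) ^ (m + 1) ≤ C := by
          refine (hbound (m + 1)).trans ?_
          have : a ^ (m + 1) ≤ 1 := pow_le_one₀ ha0.le ha1.le
          nlinarith
        have hm1 : ((m : ℝ) + 1) ≤ 2 ^ m := by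
          have h := Nat.lt_two_pow_self (n := m)
          have : (m : ℝ) + 1 ≤ ((2 ^ m : ℕ) : ℝ) := by exact_mod_cast Nat.succ_le_of_lt h
          simpa using this
        have h2m : (0 : ℝ) < 2 ^ m := by positivity
        calc ‖q m‖ * (t : ℝ) ^ m ≤ (((m : ℝ) + 1) * ‖pp (m + 1)‖) * (t : ℝ) ^ m := by
              refine mul_le_mul_of_nonneg_right hq1 (by positivity)
          _ = (((m : ℝ) + 1) / 2 ^ m) * (‖pp (m + 1)‖ * (r₁ : ℝ) ^ m) := by
              rw [htR, div_pow]
              ring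
          _ ≤ 1 * (C / r₁) := by
              refine mul_le_mul ?_ ?_ (by positivity) zero_le_one
              · rw [div_le_one h2m]
                exact hm1
              · rw [le_div_iff₀ hr₁R]
                calc ‖pp (m + 1)‖ * (r₁ : ℝ) ^ m * r₁ = ‖pp (m + 1)‖ * (r₁ : ℝ) ^ (m + 1) := by
                      ring
                  _ ≤ C := hp1
          _ = C / r₁ := one_mul _
      have hqrad0 : 0 < q.radius := lt_of_lt_of_le (by exact_mod_cast htpos) hqrad
      -- the key HasSum fact
      have key : ∀ y : Fin N → ℂ, (‖y‖₊ : ℝ≥0∞) < t →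
          HasSum (fun m => y i * (q m fun _ => y)) (F (x + y)) := by
        intro y hy
        have hyrr : (‖y‖₊ : ℝ≥0∞) < rr := by
          refine lt_trans hy ?_
          calc (t : ℝ≥0∞) ≤ (r₁ : ℝ≥0∞) := by
                exact_mod_cast (show t ≤ r₁ by
                  rw [ht]
                  exact half_le_self r₁.2)
            _ < rr := hr₁rr
        have hz : ‖zcoord i y‖₊ ≤ ‖y‖₊ := by
          have := norm_zcoord_apply_le i y
          rwa [← coe_nnnorm, ← coe_nnnorm, NNReal.coe_le_coe] at this
        have hzrr : (‖zcoord i y‖₊ : ℝ≥0∞) < rr := lt_of_le_of_lt (by exact_mod_cast hz) hyrr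
        have h1 : HasSum (fun n => pp n fun _ => y) (F (x + y)) :=
          hpr.hasSum (mem_emetric_ball_zero_iff.2 hyrr)
        have h2 : HasSum (fun n => pp n fun _ => zcoord i y) (F (x + zcoord i y)) :=
          hpr.hasSum (mem_emetric_ball_zero_iff.2 hzrr)
        have hFz : F (x + zcoord i y) = 0 := by
          refine hvan _ ?_
          rw [Pi.add_apply, hx, zcoord_apply]
          simp
        have h3 : HasSum (fun n => (pp n fun _ => y) - (pp n fun _ => zcoord i y)) (F (x + y)) := by
          simpa [hFz] using h1.sub h2
        have hf0 : (pp 0 fun _ => y) - (pp 0 fun _ => zcoord i y) = 0 := by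
          rw [Subsingleton.elim (fun _ : Fin 0 => y) (fun _ : Fin 0 => zcoord i y)]
          exact sub_self _
        have h4 : HasSum (fun m => (pp (m + 1) fun _ => y) - (pp (m + 1) fun _ => zcoord i y))
            (F (x + y)) := by
          refine (hasSum_nat_add_iff (f := fun n => (pp n fun _ => y) - (pp n fun _ => zcoord i y)) 1).2 ?_
          simpa [hf0] using h3
        have h5 : ∀ m : ℕ, y i * (q m fun _ => y)
            = (pp (m + 1) fun _ => y) - (pp (m + 1) fun _ => zcoord i y) := by
          intro m
          rw [hq]
          exact qSeries_diag pp i m y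
        simpa only [h5] using h4
      have hqsum : ∀ y : Fin N → ℂ, (‖y‖₊ : ℝ≥0∞) < t →
          HasSum (fun m => q m fun _ => y) (q.sum y) := by
        intro y hy
        exact q.hasSum (mem_emetric_ball_zero_iff.2 (lt_of_lt_of_le hy hqrad))
      have hdiv : ∀ y : Fin N → ℂ, (‖y‖₊ : ℝ≥0∞) < t → y i ≠ 0 →
          q.sum y = F (x + y) / y i := by
        intro y hy hyi
        have h6 : HasSum (fun m => y i * (q m fun _ => y)) (y i * q.sum y) :=
          (hqsum y hy).mul_left (y i)
        have h7 : y i * q.sum y = F (x + y) := h6.unique (key y hy)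
        rw [eq_div_iff hyi, mul_comm]
        exact h7
      have hqball : HasFPowerSeriesOnBall q.sum q 0 q.radius :=
        q.hasFPowerSeriesOnBall hqrad0
      have hball : HasFPowerSeriesOnBall G q x (t : ℝ≥0∞) := by
        refine ⟨hqrad, by exact_mod_cast htpos, ?_⟩
        intro y hy
        rw [mem_emetric_ball_zero_iff] at hy
        by_cases hyi : y i = 0
        · -- the slot coordinate vanishes: identify the sum via a limit
          have hsum := hqsum y hy
          suffices hval : q.sum y = G (x + y) by rwa [hval] at hsum
          have hxyi : (x + y) i = 0 := by rw [Pi.add_apply, hx, hyi, add_zero]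
          set φ : ℂ → ℂ := fun s => F (x + y + s • evec i) with hφ
          have hψ : HasDerivAt (fun s : ℂ => x + y + s • evec i) (evec i) 0 := by
            simpa using ((hasDerivAt_id (0 : ℂ)).smul_const (evec i)).const_add (x + y)
          have hFd : HasFDerivAt F (fderiv ℂ F (x + y)) (x + y) :=
            ((hF (x + y) (Set.mem_univ _)).differentiableAt).hasFDerivAt
          have hFd' : HasFDerivAt F (fderiv ℂ F (x + y))
              ((fun s : ℂ => x + y + s • evec i) 0) := by
            simpa using hFd
          have hφd : HasDerivAt φ (fderiv ℂ F (x + y) (evec i)) 0 :=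
            hFd'.comp_hasDerivAt 0 hψ
          have hφ0 : φ 0 = 0 := by
            rw [hφ]
            simp only [zero_smul, add_zero]
            exact hvan _ hxyi
          have hslope : slope φ 0 = fun s => φ s / s := by
            funext s
            rw [slope_def_field, hφ0, sub_zero, sub_zero]
          have hlim1 : Filter.Tendsto (fun s : ℂ => φ s / s) (nhdsWithin 0 {(0:ℂ)}ᶜ)
              (nhds (fderiv ℂ F (x + y) (evec i))) := by
            have h := hasDerivAt_iff_tendsto_slope.1 hφd
            rwa [hslope] at h
          have hyball : y ∈ EMetric.ball (0 : Fin N → ℂ) q.radius :=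
            mem_emetric_ball_zero_iff.2 (lt_of_lt_of_le hy hqrad)
          have hcont : ContinuousAt q.sum y :=
            hqball.continuousOn.continuousAt (EMetric.isOpen_ball.mem_nhds hyball)
          have hmapc : Continuous (fun s : ℂ => y + s • evec i) := by
            exact continuous_const.add (continuous_id.smul continuous_const)
          have hmap : Filter.Tendsto (fun s : ℂ => y + s • evec i) (nhds 0) (nhds y) := by
            have h := hmapc.continuousAt (x := (0 : ℂ))
            unfold ContinuousAt at h
            simpa using h
          have hlim2 : Filter.Tendsto (fun s : ℂ => q.sum (y + s • evec i))
              (nhdsWithin 0 {(0:ℂ)}ᶜ) (nhds (q.sum y)) :=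
            (Filter.Tendsto.comp hcont hmap).mono_left nhdsWithin_le_nhds
          have hyt : y ∈ EMetric.ball (0 : Fin N → ℂ) (t : ℝ≥0∞) :=
            mem_emetric_ball_zero_iff.2 hy
          have hball_ev : ∀ᶠ s : ℂ in nhds 0,
              (y + s • evec i) ∈ EMetric.ball (0 : Fin N → ℂ) (t : ℝ≥0∞) :=
            hmap.eventually (EMetric.isOpen_ball.eventually_mem hyt)
          have hev : ∀ᶠ s : ℂ in nhdsWithin 0 {(0:ℂ)}ᶜ,
              q.sum (y + s • evec i) = φ s / s := by
            filter_upwards [hball_ev.filter_mono nhdsWithin_le_nhds, self_mem_nhdsWithin]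
              with s hs hs0
            have hsy : (y + s • evec i) i = s := by
              rw [Pi.add_apply, hyi, zero_add, Pi.smul_apply]
              simp [evec]
            have hs' : (‖y + s • evec i‖₊ : ℝ≥0∞) < t := mem_emetric_ball_zero_iff.1 hs
            have hsne : (y + s • evec i) i ≠ 0 := by
              rw [hsy]
              exact hs0
            rw [hdiv (y + s • evec i) hs' hsne, hsy, hφ, ← add_assoc]
          have huniq : q.sum y = fderiv ℂ F (x + y) (evec i) :=
            tendsto_nhds_unique (Filter.Tendsto.congr' hev hlim2) hlim1
          have hupd : ∀ s : ℂ, Function.update (x + y) i s = x + y + s • evec i := by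
            intro s
            funext j
            rcases eq_or_ne j i with rfl | hj
            · rw [Function.update_self, Pi.add_apply, Pi.add_apply, hx, hyi, Pi.smul_apply]
              simp [evec]
            · rw [Function.update_of_ne hj]
              simp [evec, Pi.single_apply, hj]
          have hGxy : G (x + y) = fderiv ℂ F (x + y) (evec i) := by
            rw [hGdef]
            simp only [hxyi, if_pos]
            have heq : (fun s : ℂ => F (Function.update (x + y) i s)) = φ := by
              funext s
              rw [hupd s, hφ]
            rw [heq]
            exact hφd.deriv
          rw [huniq, hGxy]
        · have h6 : HasSum (fun m => (y i)⁻¹ * (y i * (q m fun _ => y)))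
              ((y i)⁻¹ * F (x + y)) := (key y hy).mul_left _
          simp only [inv_mul_cancel_left₀ hyi] at h6
          have hxyi : (x + y) i = y i := by rw [Pi.add_apply, hx, zero_add]
          have hGxy : G (x + y) = (y i)⁻¹ * F (x + y) := by
            rw [hGdef]
            simp only [hxyi, hyi, if_false]
            rw [div_eq_inv_mul]
          rwa [hGxy]
      exact ⟨q, ⟨(t : ℝ≥0∞), hball⟩⟩
    · -- easy case
      have h1 : AnalyticAt ℂ (fun z : Fin N → ℂ => F z / z i) x := by
        refine (hF x (Set.mem_univ x)).div ?_ hx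
        exact (ContinuousLinearMap.proj i : (Fin N → ℂ) →L[ℂ] ℂ).analyticAt x
      refine h1.congr ?_
      have hopen : IsOpen {z : Fin N → ℂ | z i ≠ 0} :=
        isOpen_ne.preimage (continuous_apply i)
      filter_upwards [hopen.mem_nhds hx] with z hz
      rw [hGdef]
      simp [hz]
  · -- the identity
    intro z
    by_cases hz : z i = 0
    · rw [hvan z hz, hz, zero_mul]
    · rw [hGdef]
      simp only [hz, if_false]
      field_simp


lemma hadamard_aux (A : Finset (Fin N)) :
    ∀ f : (Fin N → ℂ) → ℂ, AnalyticOnNhd ℂ f Set.univ →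
    (∀ z : Fin N → ℂ, (∀ i ∈ A, z i = 0) → f z = 0) →
    ∃ g : Fin N → ((Fin N → ℂ) → ℂ),
      (∀ i ∈ A, AnalyticOnNhd ℂ (g i) Set.univ) ∧
      ∀ z : Fin N → ℂ, f z = ∑ i ∈ A, z i * g i z := by
  classical
  induction A using Finset.induction_on with
  | empty =>
    intro f hf hvan
    refine ⟨fun _ => 0, fun i hi => absurd hi (by simp), fun z => ?_⟩
    simp [hvan z (by simp)]
  | @insert a s ha ih =>
    intro f hf hvan
    have hfz : AnalyticOnNhd ℂ (fun z => f (zcoord a z)) Set.univ := fun z _ =>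
      (hf (zcoord a z) (Set.mem_univ _)).comp ((zcoord a).analyticAt z)
    have hh : AnalyticOnNhd ℂ (fun z => f z - f (zcoord a z)) Set.univ := fun z hz =>
      (hf z hz).sub (hfz z hz)
    have hhvan : ∀ z : Fin N → ℂ, z a = 0 → f z - f (zcoord a z) = 0 := by
      intro z hz
      have hzz : zcoord a z = z := by
        funext j
        rw [zcoord_apply]
        split_ifs with h
        · rw [h, hz]
        · rfl
      rw [hzz, sub_self]
    obtain ⟨ga, hga, hgaeq⟩ := analytic_div_coord a _ hh hhvan
    have hf2van : ∀ z : Fin N → ℂ, (∀ i ∈ s, z i = 0) → f (zcoord a z) = 0 := by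
      intro z hz
      refine hvan _ (fun i hi => ?_)
      rcases Finset.mem_insert.1 hi with rfl | his
      · rw [zcoord_apply, if_pos rfl]
      · rw [zcoord_apply]
        split_ifs with h
        · rfl
        · exact hz i his
    obtain ⟨g, hg, hgeq⟩ := ih _ hfz hf2van
    refine ⟨fun i => if i = a then ga else g i, ?_, ?_⟩
    · intro i hi
      rcases eq_or_ne i a with rfl | hia
      · simpa using hga
      · simp only [hia, if_false]
        exact hg i ((Finset.mem_insert.1 hi).resolve_left hia)
    · intro z
      rw [Finset.sum_insert ha]
      have hsum : (∑ i ∈ s, z i * (if i = a then ga else g i) z) = ∑ i ∈ s, z i * g i z :=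
        Finset.sum_congr rfl (fun i hi => by
          rw [if_neg (ne_of_mem_of_not_mem hi ha)])
      rw [hsum]
      have hba : (fun i => if i = a then ga else g i) a z = ga z := by simp
      rw [hba]
      have h1 := hgaeq z
      have h2 := hgeq z
      linear_combination h1 + h2

end Stmt4Aux

/-- "holomorphic Hadamard lemma" for entire functions: if an entire function
on ℂᴺ vanishes on the coordinate subspace {z : z_i = 0 for all i ∈ A}, then it can be
written as Σ_{i ∈ A} z_i g_i with g_i entire. -/
theorem stmt_4 (N : ℕ) (A : Finset (Fin N)) (f : (Fin N → ℂ) → ℂ)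
    (hf : AnalyticOnNhd ℂ f Set.univ)
    (hvan : ∀ z : Fin N → ℂ, (∀ i ∈ A, z i = 0) → f z = 0) :
    ∃ g : Fin N → ((Fin N → ℂ) → ℂ),
      (∀ i ∈ A, AnalyticOnNhd ℂ (g i) Set.univ) ∧
      ∀ z : Fin N → ℂ, f z = ∑ i ∈ A, z i * g i z := by
  exact hadamard_aux A f hf hvan
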